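/- Let p = (p_1, …, p_n) be positive integers and L = L(p) the abelian group with generators x_1, …, x_n, c and relations p_i x_i = c for 1 ≤ i ≤ n. Then every element of L can be written uniquely in the form Σ_{i=1}^n a_i x_i + ℓ c with integers 0 ≤ a_i ≤ p_i − 1 and ℓ ∈ Z. Equivalently, {Σ_{i=1}^n a_i x_i : 0 ≤ a_i ≤ p_i − 1} is a complete set of representatives of the cosets of Zc in L. -/

import Mathlib

/-- The relations subgroup: generated by `p i • x i - c`. -/
def GLrel (n : ℕ) (p : Fin n → ℕ) : AddSubgroup (FreeAbelianGroup (Fin n ⊕ Unit)) :=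
  AddSubgroup.closure
    (Set.range fun i : Fin n =>
      (p i : ℤ) • FreeAbelianGroup.of (Sum.inl i) - FreeAbelianGroup.of (Sum.inr ()))

/-- The abelian group `L(p)` with generators `x_1, …, x_n, c` and relations `p_i x_i = c`. -/
def GLgroup (n : ℕ) (p : Fin n → ℕ) : Type :=
  FreeAbelianGroup (Fin n ⊕ Unit) ⧸ GLrel n p

instance (n : ℕ) (p : Fin n → ℕ) : AddCommGroup (GLgroup n p) :=
  QuotientAddGroup.Quotient.addCommGroup _

/-- The generator `x i` of `L(p)`. -/
def GLx (n : ℕ) (p : Fin n → ℕ) (i : Fin n) : GLgroup n p :=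
  QuotientAddGroup.mk (FreeAbelianGroup.of (Sum.inl i))

/-- The generator `c` of `L(p)`. -/
def GLc (n : ℕ) (p : Fin n → ℕ) : GLgroup n p :=
  QuotientAddGroup.mk (FreeAbelianGroup.of (Sum.inr ()))

namespace Stmt13

variable (n : ℕ) (p : Fin n → ℕ)

lemma c_eq (i : Fin n) : (p i : ℤ) • GLx n p i = GLc n p := by
  have h : (p i : ℤ) • FreeAbelianGroup.of (Sum.inl i) - FreeAbelianGroup.of (Sum.inr ())
      ∈ GLrel n p := AddSubgroup.subset_closure ⟨i, rfl⟩
  show ((p i : ℤ) • (QuotientAddGroup.mk (FreeAbelianGroup.of (Sum.inl i)) : GLgroup n p)) = _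
  rw [← QuotientAddGroup.mk_zsmul, GLc, QuotientAddGroup.eq]
  have heq : (-((p i : ℤ) • FreeAbelianGroup.of (Sum.inl i)) + FreeAbelianGroup.of (Sum.inr ())
      : FreeAbelianGroup (Fin n ⊕ Unit)) = -((p i : ℤ) • FreeAbelianGroup.of (Sum.inl i) - FreeAbelianGroup.of (Sum.inr ())) := by
    abel
  rw [heq]
  exact neg_mem h

/-- The target of the test homomorphism. -/
abbrev M : Type := ((i : Fin n) → ZMod (p i)) × ℤ

/-- Values of the test homomorphism on generators. -/
def gmap : Fin n ⊕ Unit → M n p :=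
  Sum.elim (fun i => (Pi.single i 1, ∏ j ∈ Finset.univ.erase i, (p j : ℤ)))
    (fun _ => (0, ∏ j, (p j : ℤ)))

def Φfree : FreeAbelianGroup (Fin n ⊕ Unit) →+ M n p :=
  FreeAbelianGroup.lift (gmap n p)

lemma rel_le_ker : GLrel n p ≤ (Φfree n p).ker := by
  rw [GLrel, AddSubgroup.closure_le]
  rintro _ ⟨i, rfl⟩
  simp only [SetLike.mem_coe, AddMonoidHom.mem_ker, map_sub, map_zsmul, Φfree,
    FreeAbelianGroup.lift_apply_of, gmap, Sum.elim_inl, Sum.elim_inr]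
  have h2 : ((p i : ℤ)) * ∏ j ∈ Finset.univ.erase i, (p j : ℤ) = ∏ j, (p j : ℤ) :=
    Finset.mul_prod_erase Finset.univ (fun j => ((p j : ℤ))) (Finset.mem_univ i)
  refine Prod.ext ?_ ?_ <;>
    simp only [Prod.smul_mk, Prod.fst_sub, Prod.snd_sub, Prod.fst_zero, Prod.snd_zero,
      smul_eq_mul, h2, sub_self]
  show (p i : ℤ) • Pi.single i (1 : ZMod (p i)) - (0 : (j : Fin n) → ZMod (p j)) = 0
  rw [sub_zero, ← Pi.single_smul]
  have h1 : (p i : ℤ) • (1 : ZMod (p i)) = 0 := by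
    rw [zsmul_one, Int.cast_natCast, ZMod.natCast_self]
  rw [h1, Pi.single_zero]

def Φ : GLgroup n p →+ M n p :=
  QuotientAddGroup.lift (GLrel n p) (Φfree n p) (rel_le_ker n p)

lemma Φx (i : Fin n) :
    Φ n p (GLx n p i) = (Pi.single i 1, ∏ j ∈ Finset.univ.erase i, (p j : ℤ)) := by
  show Φfree n p (FreeAbelianGroup.of (Sum.inl i)) = _
  rw [Φfree, FreeAbelianGroup.lift_apply_of]; rfl

lemma Φc : Φ n p (GLc n p) = (0, ∏ j, (p j : ℤ)) := by
  show Φfree n p (FreeAbelianGroup.of (Sum.inr ())) = _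
  rw [Φfree, FreeAbelianGroup.lift_apply_of]; rfl

lemma Φval (a : Fin n → ℕ) (l : ℤ) :
    Φ n p ((∑ i, a i • GLx n p i) + l • GLc n p)
      = (fun j => (a j : ZMod (p j)),
         (∑ i, (a i : ℤ) * ∏ j ∈ Finset.univ.erase i, (p j : ℤ)) + l * ∏ j, (p j : ℤ)) := by
  rw [map_add, map_sum, map_zsmul, Φc]
  simp only [map_nsmul, Φx]
  refine Prod.ext ?_ ?_
  · simp only [Prod.fst_add, Prod.fst_sum, Prod.smul_fst, smul_zero, add_zero]
    funext j
    rw [Finset.sum_apply]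
    rw [Finset.sum_eq_single j]
    · simp
    · intro x _ hx
      simp [Pi.single_eq_of_ne (Ne.symm hx)]
    · intro h; exact absurd (Finset.mem_univ j) h
  · simp only [Prod.snd_add, Prod.snd_sum, Prod.smul_snd]
    simp only [smul_eq_mul, nsmul_eq_mul]

end Stmt13

theorem statement_13 (n : ℕ) (p : Fin n → ℕ) (hp : ∀ i, 0 < p i) (z : GLgroup n p) :
    ∃! w : (Fin n → ℕ) × ℤ, (∀ i, w.1 i < p i) ∧
      z = (∑ i, w.1 i • GLx n p i) + w.2 • GLc n p := by
  -- Step 1: z is represented by some integer combination.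
  have hrep : ∃ (b : Fin n → ℤ) (m : ℤ),
      z = (∑ i, b i • GLx n p i) + m • GLc n p := by
    obtain ⟨f, rfl⟩ := QuotientAddGroup.mk_surjective z
    induction f using FreeAbelianGroup.induction_on with
    | zero => exact ⟨0, 0, by simp; rfl⟩
    | of x =>
      cases x with
      | inl i =>
        refine ⟨fun j => if j = i then 1 else 0, 0, ?_⟩
        show GLx n p i = _
        rw [zero_zsmul, add_zero, Finset.sum_eq_single i]
        · simp
        · intro x _ hx; simp [hx]
        · intro h; exact absurd (Finset.mem_univ i) h
      | inr u => exact ⟨0, 1, by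
        cases u
        simp only [Pi.zero_apply, zero_smul, Finset.sum_const_zero, zero_add, one_smul]; rfl⟩
    | neg x h =>
      obtain ⟨b, m, hb⟩ := h
      refine ⟨-b, -m, ?_⟩
      have : (QuotientAddGroup.mk (-FreeAbelianGroup.of x) : GLgroup n p)
          = -QuotientAddGroup.mk (FreeAbelianGroup.of x) := by
        exact QuotientAddGroup.mk_neg _ _
      rw [this, hb]
      show -(_ + _ : GLgroup n p) = _
      rw [neg_add, ← Finset.sum_neg_distrib]
      simp only [Pi.neg_apply, neg_zsmul]
    | add f g hf hg =>
      obtain ⟨b, m, hb⟩ := hf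
      obtain ⟨b', m', hb'⟩ := hg
      refine ⟨b + b', m + m', ?_⟩
      have : (QuotientAddGroup.mk (f + g) : GLgroup n p)
          = QuotientAddGroup.mk f + QuotientAddGroup.mk g := rfl
      rw [this, hb, hb']
      simp only [Pi.add_apply, add_zsmul, Finset.sum_add_distrib]
      abel
  obtain ⟨b, m, hb⟩ := hrep
  -- Step 2: reduce coefficients mod p.
  have hkey : ∀ (i : Fin n) (t : ℤ),
      t • GLx n p i = (t % p i).toNat • GLx n p i + (t / p i) • GLc n p := by
    intro i t
    rw [← Stmt13.c_eq n p i, smul_smul, ← natCast_zsmul, ← add_zsmul,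
      Int.toNat_of_nonneg (Int.emod_nonneg t (by exact_mod_cast (hp i).ne'))]
    rw [Int.emod_add_ediv_mul t (p i)]
  have hred : z = (∑ i, (b i % p i).toNat • GLx n p i)
      + ((m + ∑ i, b i / p i) • GLc n p) := by
    rw [hb]
    calc (∑ i, b i • GLx n p i) + m • GLc n p
        = (∑ i, ((b i % p i).toNat • GLx n p i + (b i / p i) • GLc n p)) + m • GLc n p := by
          rw [← Finset.sum_congr rfl fun i _ => (hkey i (b i)).symm]
      _ = _ := by
          rw [Finset.sum_add_distrib, ← Finset.sum_smul]
          rw [add_zsmul]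
          abel
  -- Step 3: assemble existence and uniqueness.
  refine ⟨⟨fun i => (b i % p i).toNat, m + ∑ i, b i / p i⟩, ⟨?_, hred⟩, ?_⟩
  · intro i
    dsimp only
    have h1 : b i % p i < p i := Int.emod_lt_of_pos _ (by exact_mod_cast hp i)
    have h2 : 0 ≤ b i % p i := Int.emod_nonneg _ (by exact_mod_cast (hp i).ne')
    omega
  · rintro ⟨a, l⟩ ⟨ha, heq⟩
    have h := heq.symm.trans hred
    have hΦ := congrArg (Stmt13.Φ n p) h
    rw [Stmt13.Φval, Stmt13.Φval] at hΦ
    have h1 := congrArg Prod.fst hΦ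
    have h2 := congrArg Prod.snd hΦ
    simp only at h1 h2
    have ha' : ∀ j, a j = (b j % p j).toNat := by
      intro j
      haveI : NeZero (p j) := ⟨(hp j).ne'⟩
      have := congrFun h1 j
      have hv := congrArg ZMod.val this
      rw [ZMod.val_natCast_of_lt (ha j), ZMod.val_natCast_of_lt ?_] at hv
      · exact hv
      · have h1' : b j % p j < p j := Int.emod_lt_of_pos _ (by exact_mod_cast hp j)
        have h2' : 0 ≤ b j % p j := Int.emod_nonneg _ (by exact_mod_cast (hp j).ne')
        omega
    have haf : a = fun i => (b i % p i).toNat := funext ha'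
    refine Prod.ext haf ?_
    show l = m + ∑ i, b i / p i
    rw [haf] at h2
    simp only at h2
    have hQ : (∏ j, (p j : ℤ)) ≠ 0 := by
      apply Finset.prod_ne_zero_iff.mpr
      intro j _
      exact_mod_cast (hp j).ne'
    exact mul_right_cancel₀ hQ (add_left_cancel h2)
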